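/- Let q > p ≥ 5 be real numbers and λ ∈ (0, π²/4]. If u ∈ C²([0,1]) satisfies u''(r) + (2/r) u'(r) + λ u(r) + u(r)|u(r)|^{p-1} + u(r)|u(r)|^{q-1} = 0 for 0 < r < 1, with u'(0) = u(1) = 0, then u ≡ 0 on [0,1]. -/

import Mathlib

open Set Real Filter

/-- `θ cos θ < sin θ` on `(0, π)`. -/
lemma bn_aux_trig {θ : ℝ} (h0 : 0 < θ) (hπ : θ < π) : θ * Real.cos θ < Real.sin θ := by
  have hmono : StrictMonoOn (fun t => Real.sin t - t * Real.cos t) (Icc 0 π) := by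
    apply strictMonoOn_of_deriv_pos (convex_Icc 0 π)
    · fun_prop
    · intro t ht
      rw [interior_Icc] at ht
      have hd : HasDerivAt (fun t => Real.sin t - t * Real.cos t) (t * Real.sin t) t := by
        have h1 := Real.hasDerivAt_sin t
        have h2 := (hasDerivAt_id t).mul (Real.hasDerivAt_cos t)
        have := h1.sub h2
        have e : (fun t => Real.sin t - t * Real.cos t) = (Real.sin - id * Real.cos) := by
          funext x; simp
        rw [e]
        exact this.congr_deriv (by simp only [id_eq]; ring)
      rw [hd.deriv]
      exact mul_pos ht.1 (Real.sin_pos_of_pos_of_lt_pi ht.1 ht.2)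
  have h := hmono ⟨le_refl 0, Real.pi_pos.le⟩ ⟨h0.le, hπ.le⟩ h0
  simp only [Real.sin_zero, Real.cos_zero, mul_one, zero_mul, sub_zero, zero_sub, mul_zero] at h
  linarith

set_option maxHeartbeats 1600000

/-- Non-existence (Remark 1 after Example 1): for `q > p ≥ 5` and
`λ ∈ (0, π²/4]`, the problem
`u'' + (2/r)u' + λu + u|u|^{p-1} + u|u|^{q-1} = 0` on `(0,1)`,
`u'(0) = u(1) = 0`, has no non-trivial C² solution. -/
theorem brezis_nirenberg_nonexistence_two_powers
    (p q : ℝ) (hp : 5 ≤ p) (hq : p < q)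
    (lam : ℝ) (hlam : lam ∈ Ioc (0:ℝ) (π ^ 2 / 4))
    (u u' u'' : ℝ → ℝ)
    (hu : ∀ r ∈ Icc (0:ℝ) 1, HasDerivAt u (u' r) r)
    (hu' : ∀ r ∈ Icc (0:ℝ) 1, HasDerivAt u' (u'' r) r)
    (hu''c : ContinuousOn u'' (Icc (0:ℝ) 1))
    (hode : ∀ r ∈ Ioo (0:ℝ) 1,
      u'' r + 2 / r * u' r + lam * u r
        + u r * |u r| ^ (p - 1) + u r * |u r| ^ (q - 1) = 0)
    (hbc0 : u' 0 = 0) (hbc1 : u 1 = 0) :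
    ∀ r ∈ Icc (0:ℝ) 1, u r = 0 := by
  obtain ⟨hlam0, hlam1⟩ := hlam
  have hp1 : (0:ℝ) < p + 1 := by linarith
  have hq1 : (0:ℝ) < q + 1 := by linarith
  set ω : ℝ := 2 * Real.sqrt lam with hωdef
  have hsq : Real.sqrt lam > 0 := Real.sqrt_pos.mpr hlam0
  have hω0 : 0 < ω := by positivity
  have hω2 : ω ^ 2 = 4 * lam := by
    rw [hωdef, mul_pow, Real.sq_sqrt hlam0.le]; ring
  have hωπ : ω ≤ π := by
    nlinarith [Real.pi_pos, hω2]
  -- the test-function quantities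
  set G : ℝ → ℝ := fun y => Real.sin (ω*y) *
      ((u y + y * u' y)^2/2 - lam*(y*u y)^2/2
        + y^2 * |u y| ^ (p+1)/(p+1) + y^2 * |u y| ^ (q+1)/(q+1))
    - ω/2 * (Real.cos (ω*y) * ((y*u y)*(u y + y*u' y))) with hGdef
  set H : ℝ → ℝ := fun y => (y * |u y| ^ (p+1)/(p+1)) *
        ((p+3)/2*ω*y*Real.cos (ω*y) - (p-1)*Real.sin (ω*y))
      + (y * |u y| ^ (q+1)/(q+1)) *
        ((q+3)/2*ω*y*Real.cos (ω*y) - (q-1)*Real.sin (ω*y)) with hHdef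
  have hucont : ContinuousOn u (Icc 0 1) :=
    fun r hr => (hu r hr).continuousAt.continuousWithinAt
  have hu'cont : ContinuousOn u' (Icc 0 1) :=
    fun r hr => (hu' r hr).continuousAt.continuousWithinAt
  -- derivative of G
  have hGderiv : ∀ r ∈ Ioo (0:ℝ) 1, HasDerivAt G (H r) r := by
    intro r hr
    have hr0 : (0:ℝ) < r := hr.1
    have hI : r ∈ Icc (0:ℝ) 1 := ⟨hr.1.le, hr.2.le⟩
    have hU : HasDerivAt u (u' r) r := hu r hI
    have hU' : HasDerivAt u' (u'' r) r := hu' r hI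
    have hv : HasDerivAt (fun y => y * u y) (1 * u r + r * u' r) r :=
      (hasDerivAt_id r).mul hU
    have hv' : HasDerivAt (fun y => u y + y * u' y)
        (u' r + (1 * u' r + r * u'' r)) r :=
      hU.add ((hasDerivAt_id r).mul hU')
    have hlin : HasDerivAt (fun y : ℝ => ω * y) (ω * 1) r := (hasDerivAt_id r).const_mul ω
    have hsin : HasDerivAt (fun y => Real.sin (ω*y)) (Real.cos (ω*r) * (ω * 1)) r :=
      (Real.hasDerivAt_sin (ω*r)).comp r hlin
    have hcos : HasDerivAt (fun y => Real.cos (ω*y)) (-Real.sin (ω*r) * (ω * 1)) r :=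
      (Real.hasDerivAt_cos (ω*r)).comp r hlin
    have hA' : HasDerivAt (fun y => |u y| ^ (p+1)) (((p+1) * |u r| ^ (p-1) * u r) * u' r) r := by
      have h := (hasDerivAt_abs_rpow (u r) (by linarith : (1:ℝ) < p+1)).comp r hU
      have e : p + 1 - 2 = p - 1 := by ring
      rw [e] at h; exact h
    have hB' : HasDerivAt (fun y => |u y| ^ (q+1)) (((q+1) * |u r| ^ (q-1) * u r) * u' r) r := by
      have h := (hasDerivAt_abs_rpow (u r) (by linarith : (1:ℝ) < q+1)).comp r hU
      have e : q + 1 - 2 = q - 1 := by ring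
      rw [e] at h; exact h
    have hΦ : HasDerivAt (fun y => (u y + y * u' y)^2/2 - lam*(y*u y)^2/2
        + y^2 * |u y| ^ (p+1)/(p+1) + y^2 * |u y| ^ (q+1)/(q+1))
        (((2:ℕ) * (u r + r * u' r)^1 * (u' r + (1 * u' r + r * u'' r)))/2
          - (lam * ((2:ℕ) * (r*u r)^1 * (1 * u r + r * u' r)))/2
          + (((2:ℕ) * r ^ 1) * |u r| ^ (p+1) + r^2 * (((p+1) * |u r| ^ (p-1) * u r) * u' r))/(p+1)
          + (((2:ℕ) * r ^ 1) * |u r| ^ (q+1) + r^2 * (((q+1) * |u r| ^ (q-1) * u r) * u' r))/(q+1)) r := by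
      exact ((((hv'.pow 2).div_const 2).sub (((hv.pow 2).const_mul lam).div_const 2)).add
        (((hasDerivAt_pow 2 r).mul hA').div_const (p+1))).add
        (((hasDerivAt_pow 2 r).mul hB').div_const (q+1))
    have hΨ : HasDerivAt (fun y => (y*u y)*(u y + y*u' y))
        ((1 * u r + r * u' r) * (u r + r * u' r)
          + (r * u r) * (u' r + (1 * u' r + r * u'' r))) r := hv.mul hv'
    have hGd : HasDerivAt G
        ((Real.cos (ω*r) * (ω * 1)) * ((u r + r * u' r)^2/2 - lam*(r*u r)^2/2
            + r^2 * |u r| ^ (p+1)/(p+1) + r^2 * |u r| ^ (q+1)/(q+1))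
          + Real.sin (ω*r) * (((2:ℕ) * (u r + r * u' r)^1 * (u' r + (1 * u' r + r * u'' r)))/2
            - (lam * ((2:ℕ) * (r*u r)^1 * (1 * u r + r * u' r)))/2
            + (((2:ℕ) * r ^ 1) * |u r| ^ (p+1) + r^2 * (((p+1) * |u r| ^ (p-1) * u r) * u' r))/(p+1)
            + (((2:ℕ) * r ^ 1) * |u r| ^ (q+1) + r^2 * (((q+1) * |u r| ^ (q-1) * u r) * u' r))/(q+1))
          - ω/2 * ((-Real.sin (ω*r) * (ω * 1)) * ((r*u r)*(u r + r*u' r))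
            + Real.cos (ω*r) * ((1 * u r + r * u' r) * (u r + r * u' r)
              + (r * u r) * (u' r + (1 * u' r + r * u'' r))))) r := by
      rw [hGdef]
      exact (hsin.mul hΦ).sub ((hcos.mul hΨ).const_mul (ω/2))
    -- identify the derivative with H r
    have hode' : r * u'' r + 2 * u' r
        + r * (lam * u r + u r * |u r| ^ (p-1) + u r * |u r| ^ (q-1)) = 0 := by
      have h := hode r hr
      have hrne : r ≠ 0 := ne_of_gt hr0
      field_simp [hrne] at h
      linear_combination h
    have hu''eq : u'' r = (-(2 * u' r)
        - r * (lam * u r + u r * |u r| ^ (p-1) + u r * |u r| ^ (q-1))) / r := by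
      have hrne : r ≠ 0 := ne_of_gt hr0
      field_simp [hrne]
      linear_combination hode'
    have hA2 : |u r| ^ (p+1) = u r ^ 2 * |u r| ^ (p-1) := by
      rcases eq_or_ne (u r) 0 with h0 | h0
      · rw [h0]; simp [Real.zero_rpow (ne_of_gt hp1)]
      · have habs : (0:ℝ) < |u r| := abs_pos.mpr h0
        rw [← sq_abs, ← Real.rpow_natCast |u r| 2, ← Real.rpow_add habs]
        congr 1
        ring
      
    have hB2 : |u r| ^ (q+1) = u r ^ 2 * |u r| ^ (q-1) := by
      rcases eq_or_ne (u r) 0 with h0 | h0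
      · rw [h0]; simp [Real.zero_rpow (ne_of_gt hq1)]
      · have habs : (0:ℝ) < |u r| := abs_pos.mpr h0
        rw [← sq_abs, ← Real.rpow_natCast |u r| 2, ← Real.rpow_add habs]
        congr 1
        ring
    have heq : H r = ((Real.cos (ω*r) * (ω * 1)) * ((u r + r * u' r)^2/2 - lam*(r*u r)^2/2
            + r^2 * |u r| ^ (p+1)/(p+1) + r^2 * |u r| ^ (q+1)/(q+1))
          + Real.sin (ω*r) * (((2:ℕ) * (u r + r * u' r)^1 * (u' r + (1 * u' r + r * u'' r)))/2
            - (lam * ((2:ℕ) * (r*u r)^1 * (1 * u r + r * u' r)))/2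
            + (((2:ℕ) * r ^ 1) * |u r| ^ (p+1) + r^2 * (((p+1) * |u r| ^ (p-1) * u r) * u' r))/(p+1)
            + (((2:ℕ) * r ^ 1) * |u r| ^ (q+1) + r^2 * (((q+1) * |u r| ^ (q-1) * u r) * u' r))/(q+1))
          - ω/2 * ((-Real.sin (ω*r) * (ω * 1)) * ((r*u r)*(u r + r*u' r))
            + Real.cos (ω*r) * ((1 * u r + r * u' r) * (u r + r * u' r)
              + (r * u r) * (u' r + (1 * u' r + r * u'' r))))) := by
      rw [hHdef]
      simp only [hu''eq, hA2, hB2]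
      have hlam' : lam = ω^2/4 := by linarith [hω2]
      rw [hlam']
      field_simp
      ring
    rw [heq]
    exact hGd
  -- continuity of G on [0,1]
  have hAc : ContinuousOn (fun y => |u y| ^ (p+1)) (Icc (0:ℝ) 1) :=
    (hucont.abs).rpow_const (fun x _ => Or.inr (by positivity))
  have hBc : ContinuousOn (fun y => |u y| ^ (q+1)) (Icc (0:ℝ) 1) :=
    (hucont.abs).rpow_const (fun x _ => Or.inr (by positivity))
  have hGcont : ContinuousOn G (Icc (0:ℝ) 1) := by
    rw [hGdef]
    apply ContinuousOn.sub
    · exact ((Real.continuous_sin.comp (continuous_const.mul continuous_id)).continuousOn).mul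
        (((((hucont.add (continuousOn_id.mul hu'cont)).pow 2).div_const 2).sub
          ((((continuousOn_id.mul hucont).pow 2).const_smul lam).div_const 2)).add
          (((continuousOn_id.pow 2).mul hAc).div_const (p+1)) |>.add
          (((continuousOn_id.pow 2).mul hBc).div_const (q+1)))
    · exact (continuousOn_const.mul
        (((Real.continuous_cos.comp (continuous_const.mul continuous_id)).continuousOn).mul
          ((continuousOn_id.mul hucont).mul (hucont.add (continuousOn_id.mul hu'cont)))))
  -- H ≤ 0 and G is antitone
  have hKp : ∀ r ∈ Ioo (0:ℝ) 1, (p+3)/2*ω*r*Real.cos (ω*r) - (p-1)*Real.sin (ω*r) < 0 := by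
    intro r hr
    have hθ0 : 0 < ω * r := mul_pos hω0 hr.1
    have hθπ : ω * r < π := by nlinarith [hr.2, hω0, hωπ, Real.pi_pos]
    have h1 := bn_aux_trig hθ0 hθπ
    have h2 := Real.sin_pos_of_pos_of_lt_pi hθ0 hθπ
    nlinarith [h1, h2]
  have hKq : ∀ r ∈ Ioo (0:ℝ) 1, (q+3)/2*ω*r*Real.cos (ω*r) - (q-1)*Real.sin (ω*r) < 0 := by
    intro r hr
    have hθ0 : 0 < ω * r := mul_pos hω0 hr.1
    have hθπ : ω * r < π := by nlinarith [hr.2, hω0, hωπ, Real.pi_pos]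
    have h1 := bn_aux_trig hθ0 hθπ
    have h2 := Real.sin_pos_of_pos_of_lt_pi hθ0 hθπ
    nlinarith [h1, h2]
  have hHnonpos : ∀ r ∈ Ioo (0:ℝ) 1, H r ≤ 0 := by
    intro r hr
    rw [hHdef]
    have h1 : (0:ℝ) ≤ r * |u r| ^ (p+1)/(p+1) :=
      div_nonneg (mul_nonneg hr.1.le (Real.rpow_nonneg (abs_nonneg _) _)) hp1.le
    have h2 : (0:ℝ) ≤ r * |u r| ^ (q+1)/(q+1) :=
      div_nonneg (mul_nonneg hr.1.le (Real.rpow_nonneg (abs_nonneg _) _)) hq1.le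
    have := hKp r hr
    have := hKq r hr
    nlinarith [mul_nonneg h1 (neg_nonneg.mpr (hKp r hr).le),
      mul_nonneg h2 (neg_nonneg.mpr (hKq r hr).le)]
  have hanti : AntitoneOn G (Icc (0:ℝ) 1) := by
    apply antitoneOn_of_deriv_nonpos (convex_Icc 0 1) hGcont
    · intro x hx
      rw [interior_Icc] at hx
      exact (hGderiv x hx).differentiableAt.differentiableWithinAt
    · intro x hx
      rw [interior_Icc] at hx
      rw [(hGderiv x hx).deriv]
      exact hHnonpos x hx
  -- boundary values
  have hG0 : G 0 = 0 := by rw [hGdef]; simp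
  have hG1 : 0 ≤ G 1 := by
    rw [hGdef]
    simp only [hbc1, mul_one, one_mul, abs_zero, mul_zero, zero_mul, zero_add, add_zero,
      Real.zero_rpow (ne_of_gt hp1), Real.zero_rpow (ne_of_gt hq1)]
    have hs : 0 ≤ Real.sin ω := Real.sin_nonneg_of_nonneg_of_le_pi hω0.le hωπ
    have hs' : 0 ≤ Real.sin (Real.sqrt lam * 2) := by rwa [hωdef, mul_comm] at hs
    ring_nf
    nlinarith [mul_nonneg hs' (sq_nonneg (u' 1))]
  -- G vanishes identically
  have hGzero : ∀ r ∈ Icc (0:ℝ) 1, G r = 0 := by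
    intro r hr
    have h1 : G r ≤ G 0 := by
      rcases eq_or_lt_of_le hr.1 with h | h
      · rw [← h]
      · exact hanti ⟨le_refl 0, zero_le_one⟩ hr hr.1
    have h2 : G 1 ≤ G r := hanti hr ⟨zero_le_one, le_refl 1⟩ hr.2
    rw [hG0] at h1
    linarith
  -- hence H vanishes on (0,1)
  have hHzero : ∀ r ∈ Ioo (0:ℝ) 1, H r = 0 := by
    intro r hr
    have hGc : HasDerivAt G 0 r := by
      apply (hasDerivAt_const r (0:ℝ)).congr_of_eventuallyEq
      filter_upwards [Ioo_mem_nhds hr.1 hr.2] with y hy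
      exact hGzero y (Ioo_subset_Icc_self hy)
    exact ((hGderiv r hr).unique hGc)
  -- hence u vanishes on (0,1)
  have huIoo : ∀ r ∈ Ioo (0:ℝ) 1, u r = 0 := by
    intro r hr
    by_contra hne
    have habs : (0:ℝ) < |u r| := abs_pos.mpr hne
    have hA : (0:ℝ) < |u r| ^ (p+1) := Real.rpow_pos_of_pos habs _
    have hB : (0:ℝ) < |u r| ^ (q+1) := Real.rpow_pos_of_pos habs _
    have h1 : (0:ℝ) < r * |u r| ^ (p+1)/(p+1) := div_pos (mul_pos hr.1 hA) hp1
    have h2 : (0:ℝ) < r * |u r| ^ (q+1)/(q+1) := div_pos (mul_pos hr.1 hB) hq1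
    have hz := hHzero r hr
    rw [hHdef] at hz
    nlinarith [mul_neg_of_pos_of_neg h1 (hKp r hr), mul_neg_of_pos_of_neg h2 (hKq r hr)]
  -- conclude on [0,1]
  intro r hr
  rcases eq_or_lt_of_le hr.1 with h0 | h0
  · -- r = 0 : by continuity
    subst h0
    have hwc : Tendsto u (nhdsWithin 0 (Ioo (0:ℝ) 1)) (nhds (u 0)) :=
      (hu 0 ⟨le_refl 0, zero_le_one⟩).continuousAt.continuousWithinAt
    have hwz : Tendsto u (nhdsWithin 0 (Ioo (0:ℝ) 1)) (nhds 0) := by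
      apply Tendsto.congr' ?_ tendsto_const_nhds
      filter_upwards [self_mem_nhdsWithin] with y hy
      exact (huIoo y hy).symm
    haveI : (nhdsWithin (0:ℝ) (Ioo (0:ℝ) 1)).NeBot := by
      apply mem_closure_iff_nhdsWithin_neBot.mp
      rw [closure_Ioo (by norm_num : (0:ℝ) ≠ 1)]
      exact ⟨le_refl 0, zero_le_one⟩
    exact tendsto_nhds_unique hwc hwz
  · rcases eq_or_lt_of_le hr.2 with h1 | h1
    · rw [h1]; exact hbc1
    · exact huIoo r ⟨h0, h1⟩
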